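/- For every λ ∈ ℂ, the matrix exponential exp(−i·O′) equals the 3×3 identity matrix if and only if √2·|λ| is an integer multiple of 2π. -/

import Mathlib

noncomputable section
open Matrix

/-- The interaction block `O′` associated with the coupling constant `λ`. -/
def Oprime (l : ℂ) : Matrix (Fin 3) (Fin 3) ℂ :=
  !![0, 0, -(starRingEnd ℂ) l;
     0, 0, -(starRingEnd ℂ) l;
     -l, -l, 0]

/-- Diagonalizing matrix for `Oprime`. -/
def Pmat (a cb : ℂ) : Matrix (Fin 3) (Fin 3) ℂ :=
  !![1, cb, cb; -1, cb, cb; 0, a, -a]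

/-- Inverse of the diagonalizing matrix. -/
def Qmat (a cb : ℂ) : Matrix (Fin 3) (Fin 3) ℂ :=
  !![1/2, -1/2, 0; 1/(4*cb), 1/(4*cb), 1/(2*a); 1/(4*cb), 1/(4*cb), -(1/(2*a))]

set_option maxHeartbeats 2000000 in
lemma exp_interaction_aux (a : ℝ) (l : ℂ) (ha' : (a : ℂ) ≠ 0)
    (hcb : (starRingEnd ℂ) l ≠ 0)
    (ha2 : (a : ℂ) ^ 2 = 2 * l * (starRingEnd ℂ) l) :
    NormedSpace.exp ((-Complex.I) • Oprime l) = 1 ↔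
      ∃ n : ℤ, a = n * (2 * Real.pi) := by
  obtain ⟨cb, hcb_def⟩ : ∃ cb, cb = (starRingEnd ℂ) l := ⟨_, rfl⟩
  rw [← hcb_def] at hcb ha2
  have hPQ : Pmat a cb * Qmat a cb = 1 := by
    ext i j
    fin_cases i <;> fin_cases j <;>
      simp [Pmat, Qmat, Matrix.mul_apply, Fin.sum_univ_three, Matrix.vecHead,
        Matrix.vecTail] <;>
      field_simp <;> ring
  have hQP : Qmat a cb * Pmat a cb = 1 := by
    ext i j
    fin_cases i <;> fin_cases j <;>
      simp [Pmat, Qmat, Matrix.mul_apply, Fin.sum_univ_three, Matrix.vecHead,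
        Matrix.vecTail] <;>
      field_simp <;> ring
  have hO : (-Complex.I) • Oprime l =
      !![0, 0, Complex.I * cb; 0, 0, Complex.I * cb; Complex.I * l, Complex.I * l, 0] := by
    ext i j
    fin_cases i <;> fin_cases j <;>
      simp [Oprime, ← hcb_def, Matrix.vecHead, Matrix.vecTail] <;> ring
  have hDlit : (diagonal ![0, Complex.I * (a:ℂ), -(Complex.I * (a:ℂ))] :
      Matrix (Fin 3) (Fin 3) ℂ) =
      !![0, 0, 0; 0, Complex.I * (a:ℂ), 0; 0, 0, -(Complex.I * (a:ℂ))] := by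
    ext i j
    fin_cases i <;> fin_cases j <;>
      simp [Matrix.diagonal, Matrix.vecHead, Matrix.vecTail]
  have hAP : ((-Complex.I) • Oprime l) * Pmat a cb =
      Pmat a cb * diagonal ![0, Complex.I * a, -(Complex.I * a)] := by
    rw [hO, hDlit]
    ext i j
    fin_cases i <;> fin_cases j <;>
      simp [Pmat, Matrix.mul_apply, Fin.sum_univ_three, Matrix.vecHead, Matrix.vecTail] <;>
      first
        | ring1
        | linear_combination Complex.I * ha2
        | linear_combination (-Complex.I) * ha2
        | linear_combination (Complex.I / 2) * ha2
        | linear_combination (-(Complex.I) / 2) * ha2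
  have hPinv : (Pmat a cb)⁻¹ = Qmat a cb := Matrix.inv_eq_right_inv hPQ
  have hUnitP : IsUnit (Pmat a cb) := ⟨⟨_, _, hPQ, hQP⟩, rfl⟩
  have hA : (-Complex.I) • Oprime l =
      Pmat a cb * diagonal ![0, Complex.I * a, -(Complex.I * a)] * (Pmat a cb)⁻¹ := by
    rw [hPinv]
    calc (-Complex.I) • Oprime l
        = ((-Complex.I) • Oprime l) * (Pmat a cb * Qmat a cb) := by
          rw [hPQ, Matrix.mul_one]
      _ = (((-Complex.I) • Oprime l) * Pmat a cb) * Qmat a cb := by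
          rw [Matrix.mul_assoc]
      _ = Pmat a cb * diagonal ![0, Complex.I * a, -(Complex.I * a)] * Qmat a cb := by
          rw [hAP]
  have hexpD : NormedSpace.exp
      (diagonal ![0, Complex.I * (a:ℂ), -(Complex.I * (a:ℂ))] : Matrix (Fin 3) (Fin 3) ℂ) =
      diagonal ![1, Complex.exp (Complex.I * a), Complex.exp (-(Complex.I * a))] := by
    rw [Matrix.exp_diagonal]
    have hv : (NormedSpace.exp (![0, Complex.I * (a:ℂ), -(Complex.I * (a:ℂ))]) : Fin 3 → ℂ) =
        ![1, Complex.exp (Complex.I * a), Complex.exp (-(Complex.I * a))] := by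
      rw [Pi.exp_def]
      funext i
      fin_cases i <;> simp [← Complex.exp_eq_exp_ℂ]
    rw [hv]
  have hmain : NormedSpace.exp ((-Complex.I) • Oprime l) =
      Pmat a cb * diagonal ![1, Complex.exp (Complex.I * a), Complex.exp (-(Complex.I * a))] *
        Qmat a cb := by
    rw [hA, Matrix.exp_conj _ _ hUnitP, hexpD, hPinv]
  rw [hmain]
  have hconj_iff : Pmat a cb *
      diagonal ![1, Complex.exp (Complex.I * a), Complex.exp (-(Complex.I * a))] *
        Qmat a cb = 1 ↔
      (diagonal ![1, Complex.exp (Complex.I * a), Complex.exp (-(Complex.I * a))] :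
        Matrix (Fin 3) (Fin 3) ℂ) = 1 := by
    constructor
    · intro h
      have h2 := congrArg (fun X => Qmat a cb * X * Pmat a cb) h
      beta_reduce at h2
      rw [Matrix.mul_one, ← Matrix.mul_assoc, ← Matrix.mul_assoc, hQP, Matrix.one_mul,
        Matrix.mul_assoc, hQP, Matrix.mul_one] at h2
      exact h2
    · intro h
      rw [h, Matrix.mul_one, hPQ]
  rw [hconj_iff]
  have hE_iff : (diagonal ![1, Complex.exp (Complex.I * a), Complex.exp (-(Complex.I * a))] :
      Matrix (Fin 3) (Fin 3) ℂ) = 1 ↔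
      Complex.exp (Complex.I * a) = 1 := by
    constructor
    · intro h
      have := Matrix.ext_iff.2 h 1 1
      simpa [Matrix.diagonal, Matrix.one_apply] using this
    · intro h
      have h' : Complex.exp (-(Complex.I * a)) = 1 := by
        rw [Complex.exp_neg, h]; simp
      ext i j
      fin_cases i <;> fin_cases j <;>
        simp [Matrix.diagonal, Matrix.one_apply, Matrix.vecHead, Matrix.vecTail, h, h']
  rw [hE_iff, Complex.exp_eq_one_iff]
  constructor
  · rintro ⟨n, hn⟩
    refine ⟨n, ?_⟩
    have h2 : (a : ℂ) = n * (2 * Real.pi) := by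
      have hI : Complex.I * a = Complex.I * ((n : ℂ) * (2 * Real.pi)) := by
        rw [hn]; push_cast; ring
      exact mul_left_cancel₀ Complex.I_ne_zero hI
    exact_mod_cast h2
  · rintro ⟨n, hn⟩
    refine ⟨n, ?_⟩
    have h2 : (a : ℂ) = n * (2 * Real.pi) := by exact_mod_cast hn
    rw [h2]; push_cast; ring

/-- For every `λ ∈ ℂ`, the one-step interaction unitary `exp(−i·O′)` equals the identity
if and only if `√2·|λ|` is an integer multiple of `2π`. -/
theorem exp_interaction_eq_one_iff (l : ℂ) :
    NormedSpace.exp ((-Complex.I) • Oprime l) = 1 ↔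
      ∃ n : ℤ, Real.sqrt 2 * ‖l‖ = n * (2 * Real.pi) := by
  rcases eq_or_ne l 0 with rfl | hl
  · constructor
    · intro _; exact ⟨0, by simp⟩
    · intro _
      have h0 : Oprime 0 = 0 := by
        ext i j
        fin_cases i <;> fin_cases j <;>
          simp [Oprime, Matrix.vecHead, Matrix.vecTail]
      rw [h0, smul_zero, NormedSpace.exp_zero]
  · have habs : ‖l‖ ≠ 0 := by simpa using hl
    have ha : Real.sqrt 2 * ‖l‖ ≠ 0 := mul_ne_zero (by positivity) habs
    have ha' : ((Real.sqrt 2 * ‖l‖ : ℝ) : ℂ) ≠ 0 := by exact_mod_cast ha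
    have hcb : (starRingEnd ℂ) l ≠ 0 := by simpa using hl
    have ha2 : ((Real.sqrt 2 * ‖l‖ : ℝ) : ℂ) ^ 2 = 2 * l * (starRingEnd ℂ) l := by
      have h1 : l * (starRingEnd ℂ) l = ((‖l‖ : ℝ) : ℂ) ^ 2 := by
        rw [Complex.mul_conj, Complex.normSq_eq_norm_sq]
        push_cast; ring
      have h2 : (Real.sqrt 2 * ‖l‖) ^ 2 = 2 * (‖l‖) ^ 2 := by
        rw [mul_pow, Real.sq_sqrt (by norm_num : (0:ℝ) ≤ 2)]
      calc ((Real.sqrt 2 * ‖l‖ : ℝ) : ℂ) ^ 2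
          = (((Real.sqrt 2 * ‖l‖) ^ 2 : ℝ) : ℂ) := by push_cast; ring
        _ = ((2 * (‖l‖) ^ 2 : ℝ) : ℂ) := by rw [h2]
        _ = 2 * (l * (starRingEnd ℂ) l) := by push_cast [h1]; ring
        _ = 2 * l * (starRingEnd ℂ) l := by ring
    exact exp_interaction_aux (Real.sqrt 2 * ‖l‖) l ha' hcb ha2
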